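/- arXiv:2005.06820 — 4 statements merged into one kernel-verified Lean document; each statement's English description precedes it below -/
import Mathlib

section
/- Let m_n := 2·(2n)!·3^n / ((n+2)!·n!) for n ∈ ℕ. Then lim_{n→∞} m_n · n^{5/2} · 12^{−n} = 2/√π. -/
open Nat Filter Real

lemma centralBinom_key (n : ℕ) (hn : 1 ≤ n) :
    (Nat.centralBinom n : ℝ) * Real.sqrt n / 4 ^ n
      = Stirling.stirlingSeq (2 * n) / (Stirling.stirlingSeq n) ^ 2 := by
  have hn0 : (0:ℝ) < n := by exact_mod_cast hn
  have hcb : ((2 * n)! : ℝ) = (Nat.centralBinom n : ℝ) * (n ! : ℝ) * (n ! : ℝ) := by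
    have h := Nat.choose_mul_factorial_mul_factorial (show n ≤ 2 * n by omega)
    rw [show 2 * n - n = n by omega] at h
    exact_mod_cast (congrArg (Nat.cast (R := ℝ)) h).symm
  have hs : Real.sqrt (2 * ((2 * n : ℕ) : ℝ)) = 2 * Real.sqrt n := by
    rw [show (2 : ℝ) * ((2 * n : ℕ) : ℝ) = (2:ℝ)^2 * (n:ℝ) by push_cast; ring,
      Real.sqrt_mul (by positivity), Real.sqrt_sq (by norm_num)]
  have hs2 : Real.sqrt (2 * (n : ℝ)) = Real.sqrt 2 * Real.sqrt n :=
    Real.sqrt_mul (by norm_num) _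
  have hpow : (((2 * n : ℕ) : ℝ) / Real.exp 1) ^ (2 * n)
      = 4 ^ n * (((n:ℝ) / Real.exp 1) ^ n) ^ 2 := by
    rw [show ((2 * n : ℕ) : ℝ) / Real.exp 1 = 2 * ((n:ℝ) / Real.exp 1) by push_cast; ring,
      mul_pow, pow_mul, mul_comm 2 n, pow_mul]
    norm_num [mul_comm]
  unfold Stirling.stirlingSeq
  rw [hs, hs2, hpow, hcb]
  have hA : (0:ℝ) < ((n:ℝ) / Real.exp 1) ^ n := by positivity
  have hS : (0:ℝ) < Real.sqrt n := Real.sqrt_pos.mpr hn0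
  have hT : Real.sqrt 2 * Real.sqrt 2 = 2 := Real.mul_self_sqrt (by norm_num)
  have hF : (0:ℝ) < (n ! : ℝ) := by positivity
  generalize ((n:ℝ) / Real.exp 1) ^ n = A at hA ⊢
  generalize Real.sqrt (n:ℝ) = S at hS ⊢
  generalize Real.sqrt 2 = T at hT ⊢
  have hTSA : (T * S * A) ^ 2 = 2 * (S * A) ^ 2 := by
    rw [show T * S * A = T * (S * A) by ring, mul_pow, sq, hT]
  rw [div_pow, hTSA]
  have h4 : ((4:ℝ) ^ n) ≠ 0 := by positivity
  field_simp

lemma centralBinom_tendsto :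
    Filter.Tendsto (fun n : ℕ => (Nat.centralBinom n : ℝ) * Real.sqrt n / 4 ^ n)
      Filter.atTop (nhds (1 / Real.sqrt π)) := by
  have hpi : (0:ℝ) < Real.sqrt π := Real.sqrt_pos.mpr Real.pi_pos
  have h2 : Filter.Tendsto (fun n : ℕ => Stirling.stirlingSeq (2 * n)) Filter.atTop
      (nhds (Real.sqrt π)) :=
    Stirling.tendsto_stirlingSeq_sqrt_pi.comp
      (tendsto_atTop_atTop_of_monotone (fun a b h => by omega) (fun b => ⟨b, by omega⟩))
  have hmain : Filter.Tendsto
      (fun n : ℕ => Stirling.stirlingSeq (2 * n) / (Stirling.stirlingSeq n) ^ 2)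
      Filter.atTop (nhds (Real.sqrt π / (Real.sqrt π) ^ 2)) :=
    h2.div (Stirling.tendsto_stirlingSeq_sqrt_pi.pow 2) (by positivity)
  have hval : Real.sqrt π / (Real.sqrt π) ^ 2 = 1 / Real.sqrt π := by
    field_simp [sq]
  rw [hval] at hmain
  exact hmain.congr' (by
    filter_upwards [Filter.eventually_ge_atTop 1] with n hn
    exact (centralBinom_key n hn).symm)

/-- With `mₙ = 2·(2n)!·3ⁿ/((n+2)!·n!)` (Tutte's formula for the number of rooted
planar maps with `n` edges), we have `mₙ · n^{5/2} · 12^{-n} → 2/√π`. -/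
theorem tutte_asymptotics :
    Filter.Tendsto
      (fun n : ℕ =>
        (2 * (2 * n)! * 3 ^ n / ((n + 2)! * n !) : ℝ)
          * (n : ℝ) ^ ((5 : ℝ) / 2) * (12 : ℝ) ^ (-(n : ℝ)))
      Filter.atTop (nhds (2 / Real.sqrt π)) := by
  have hrat : Filter.Tendsto
      (fun n : ℕ => 2 * ((n:ℝ) / ((n:ℝ) + 1)) * ((n:ℝ) / ((n:ℝ) + 2)))
      Filter.atTop (nhds 2) := by
    have := ((tendsto_natCast_div_add_atTop (1:ℝ)).const_mul 2).mul
      (tendsto_natCast_div_add_atTop (2:ℝ))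
    simpa using this
  have hmul := hrat.mul centralBinom_tendsto
  rw [show (2:ℝ) / Real.sqrt π = 2 * (1 / Real.sqrt π) by ring]
  refine hmul.congr' ?_
  filter_upwards [Filter.eventually_ge_atTop 1] with n hn
  have hn0 : (0:ℝ) < n := by exact_mod_cast hn
  have hcb : ((2 * n)! : ℝ) = (Nat.centralBinom n : ℝ) * (n ! : ℝ) * (n ! : ℝ) := by
    have h := Nat.choose_mul_factorial_mul_factorial (show n ≤ 2 * n by omega)
    rw [show 2 * n - n = n by omega] at h
    exact_mod_cast (congrArg (Nat.cast (R := ℝ)) h).symm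
  have hfac2 : ((n + 2)! : ℝ) = ((n:ℝ) + 2) * ((n:ℝ) + 1) * (n ! : ℝ) := by
    rw [show n + 2 = (n + 1) + 1 by ring, Nat.factorial_succ, Nat.factorial_succ]
    push_cast; ring
  have hrpow : (n : ℝ) ^ ((5:ℝ)/2) = (n:ℝ)^(2:ℕ) * Real.sqrt n := by
    rw [Real.sqrt_eq_rpow, show ((n:ℝ))^(2:ℕ) = (n:ℝ)^((2:ℕ):ℝ) from (Real.rpow_natCast _ 2).symm,
      ← Real.rpow_add hn0]
    norm_num
  have h12 : (12 : ℝ) ^ (-(n:ℝ)) = ((4:ℝ) ^ n * 3 ^ n)⁻¹ := by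
    rw [Real.rpow_neg (by norm_num : (0:ℝ) ≤ 12), Real.rpow_natCast, ← mul_pow]
    norm_num
  have hfacne : (n ! : ℝ) ≠ 0 := by positivity
  rw [hcb, hfac2, hrpow, h12]
  field_simp
end

section
/- Let m_n := 2·(2n)!·3^n / ((n+2)!·n!) for n ∈ ℕ. For every real z with 0 < z < 1/12, the series Σ_{n≥0} m_n·z^n converges and Σ_{n≥0} m_n·z^n = (18z − 1 + (1−12z)^{3/2}) / (54z²). -/
open Nat Filter Real Finset

private lemma catalan_le_four_pow' (n : ℕ) : catalan n ≤ 4 ^ n := by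
  calc catalan n ≤ (n + 1) * catalan n := Nat.le_mul_of_pos_left _ n.succ_pos
    _ = n.centralBinom := succ_mul_catalan_eq_centralBinom n
    _ = (2 * n).choose n := Nat.centralBinom_eq_two_mul_choose n
    _ ≤ (2 * n + 1).choose n := Nat.choose_le_choose n (by omega)
    _ ≤ 4 ^ n := Nat.choose_middle_le_pow n

private lemma catalan_rec' (n : ℕ) :
    (n + 2) * catalan (n + 1) = (4 * n + 2) * catalan n := by
  have h1 := succ_mul_catalan_eq_centralBinom (n + 1)
  have h2 := Nat.succ_mul_centralBinom_succ n
  have h3 := succ_mul_catalan_eq_centralBinom n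
  refine Nat.eq_of_mul_eq_mul_left (show 0 < n + 1 by omega) ?_
  calc (n + 1) * ((n + 2) * catalan (n + 1))
      = (n + 1) * (n + 1 + 1) * catalan (n + 1) := by ring
    _ = (n + 1) * Nat.centralBinom (n + 1) := by rw [mul_assoc, h1]
    _ = 2 * (2 * n + 1) * ((n + 1) * catalan n) := by rw [h2, h3]
    _ = (n + 1) * ((4 * n + 2) * catalan n) := by ring

private lemma catalan_summable' {x : ℝ} (hx : |x| < 1 / 4) :
    Summable (fun n : ℕ => (catalan n : ℝ) * x ^ n) := by
  apply Summable.of_norm_bounded (g := fun n => (4 * |x|) ^ n)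
  · exact summable_geometric_of_lt_one (by positivity) (by linarith)
  · intro n
    rw [norm_mul, norm_pow, Real.norm_natCast, Real.norm_eq_abs, mul_pow]
    gcongr
    exact_mod_cast catalan_le_four_pow' n

/-- The generating function of the Catalan numbers. -/
noncomputable def catGF (x : ℝ) : ℝ := ∑' n : ℕ, (catalan n : ℝ) * x ^ n

private lemma catGF_eq {x : ℝ} (hx : |x| < 1 / 4) :
    catGF x = 1 + x * (catGF x) ^ 2 := by
  have hs := catalan_summable' hx
  have hnorm : Summable (fun n : ℕ => ‖(catalan n : ℝ) * x ^ n‖) := hs.abs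
  have hprod := summable_mul_of_summable_norm
      (f := fun n : ℕ => (catalan n : ℝ) * x ^ n)
      (g := fun n : ℕ => (catalan n : ℝ) * x ^ n) hnorm hnorm
  have hsq : (catGF x) ^ 2 = ∑' n : ℕ, (catalan (n + 1) : ℝ) * x ^ n := by
    rw [sq, catGF, Summable.tsum_mul_tsum_eq_tsum_sum_antidiagonal hs hs hprod]
    congr 1
    funext n
    rw [catalan_succ']
    push_cast
    rw [Finset.sum_mul]
    apply Finset.sum_congr rfl
    intro p hp
    have := Finset.HasAntidiagonal.mem_antidiagonal.mp hp
    rw [← this, pow_add]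
    ring
  have hshift : catGF x = 1 + ∑' n : ℕ, (catalan (n + 1) : ℝ) * x ^ (n + 1) := by
    rw [catGF, Summable.tsum_eq_zero_add hs]
    simp
  rw [hsq, ← tsum_mul_left, hshift]
  exact congrArg (1 + ·) (tsum_congr fun n => by ring)

private lemma catGF_sq {x : ℝ} (hx : |x| < 1 / 4) :
    (2 * x * catGF x - 1) ^ 2 = 1 - 4 * x := by
  have h := catGF_eq hx
  nlinarith [h]

private lemma catGF_sqrt {x : ℝ} (hx0 : 0 ≤ x) (hx : x < 1 / 4) :
    Real.sqrt (1 - 4 * x) = 1 - 2 * x * catGF x := by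
  have habs : ∀ y : ℝ, y ∈ Set.Icc 0 x → |y| < 1 / 4 := by
    intro y hy
    rw [abs_of_nonneg hy.1]
    linarith [hy.2]
  have hc : ContinuousOn catGF (Set.Icc 0 x) := by
    apply continuousOn_tsum (u := fun n : ℕ => (catalan n : ℝ) * x ^ n)
    · intro n; exact (continuous_const.mul (continuous_pow n)).continuousOn
    · exact catalan_summable' (by rw [abs_of_nonneg hx0]; exact hx)
    · intro n y hy
      rw [norm_mul, norm_pow, Real.norm_natCast, Real.norm_eq_abs,
        abs_of_nonneg hy.1]
      have h1 : (0:ℝ) ≤ (catalan n : ℝ) := by positivity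
      have : y ^ n ≤ x ^ n := pow_le_pow_left₀ hy.1 hy.2 n
      nlinarith [pow_nonneg hy.1 n]
  have hu : ContinuousOn (fun y => 2 * y * catGF y - 1) (Set.Icc 0 x) :=
    ((continuousOn_const.mul continuousOn_id).mul hc).sub continuousOn_const
  have hne : ∀ y ∈ Set.Icc 0 x, 2 * y * catGF y - 1 ≠ 0 := by
    intro y hy h0
    have := catGF_sq (habs y hy)
    rw [h0] at this
    simp at this
    linarith [hy.2]
  have hneg : 2 * x * catGF x - 1 < 0 := by
    rcases lt_or_ge (2 * x * catGF x - 1) 0 with h | h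
    · exact h
    · exfalso
      have hu0 : 2 * (0:ℝ) * catGF 0 - 1 = -1 := by ring
      have hmem : (0:ℝ) ∈ Set.Icc (2 * (0:ℝ) * catGF 0 - 1) (2 * x * catGF x - 1) := by
        rw [hu0]; constructor <;> linarith
      obtain ⟨y, hy, hy0⟩ := intermediate_value_Icc hx0 hu hmem
      exact hne y hy hy0
  have := catGF_sq (habs x ⟨hx0, le_refl _⟩)
  rw [← this, Real.sqrt_sq_eq_abs, abs_of_nonpos (by linarith)]
  ring

private lemma factorial_two_mul' (n : ℕ) :
    (2 * n)! = (n + 1) * catalan n * (n ! * n !) := by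
  have h1 : (2 * n).choose n * n ! * (2 * n - n)! = (2 * n)! :=
    Nat.choose_mul_factorial_mul_factorial (by omega)
  have h2 : 2 * n - n = n := by omega
  rw [h2] at h1
  rw [← h1, ← Nat.centralBinom_eq_two_mul_choose, ← succ_mul_catalan_eq_centralBinom]
  ring

private lemma tutte_m_eq (n : ℕ) : (2 * (2 * n)! * 3 ^ n / ((n + 2)! * n !) : ℝ)
    = 2 * 3 ^ n * (catalan n : ℝ) / (n + 2) := by
  have h1 : ((2 * n)! : ℝ) = (n + 1) * (catalan n : ℝ) * (n ! * n !) := by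
    exact_mod_cast congrArg (Nat.cast : ℕ → ℝ) (factorial_two_mul' n)
  have h2 : ((n + 2)! : ℝ) = (n + 2) * ((n + 1) * n !) := by
    rw [show n + 2 = (n + 1) + 1 by rfl, Nat.factorial_succ, Nat.factorial_succ]
    push_cast; ring
  have hf : (n ! : ℝ) ≠ 0 := by exact_mod_cast (Nat.factorial_pos n).ne'
  have hn1 : ((n : ℝ) + 1) ≠ 0 := by positivity
  have hn2 : ((n : ℝ) + 2) ≠ 0 := by positivity
  rw [h1, h2]
  field_simp

private lemma coeff_identity (n : ℕ) :
    12 * 3 ^ n * (catalan n : ℝ) - 9 * (2 * 3 ^ n * (catalan n : ℝ) / (n + 2))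
      = 3 ^ (n + 1) * (catalan (n + 1) : ℝ) := by
  have h : ((n : ℝ) + 2) * (catalan (n + 1) : ℝ) = (4 * n + 2) * (catalan n : ℝ) := by
    exact_mod_cast congrArg (Nat.cast : ℕ → ℝ) (catalan_rec' n)
  have hn2 : ((n : ℝ) + 2) ≠ 0 := by positivity
  field_simp
  linear_combination (-3 * (3:ℝ)^n) * h

/-- For `0 < z < 1/12`, the generating function of Tutte's numbers
`mₙ = 2·(2n)!·3ⁿ/((n+2)!·n!)` converges and has the closed form
`(18z − 1 + (1−12z)^{3/2})/(54z²)`. -/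
theorem tutte_generating_function (z : ℝ) (hz0 : 0 < z) (hz1 : z < 1 / 12) :
    Summable (fun n : ℕ => (2 * (2 * n)! * 3 ^ n / ((n + 2)! * n !) : ℝ) * z ^ n) ∧
    (∑' n : ℕ, (2 * (2 * n)! * 3 ^ n / ((n + 2)! * n !) : ℝ) * z ^ n)
      = (18 * z - 1 + (1 - 12 * z) ^ ((3 : ℝ) / 2)) / (54 * z ^ 2) := by
  set x : ℝ := 3 * z with hxdef
  have hx0 : 0 < x := by positivity
  have hx4 : x < 1 / 4 := by rw [hxdef]; linarith
  have habs : |x| < 1 / 4 := by rw [abs_of_pos hx0]; exact hx4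
  have hA : Summable (fun n : ℕ => (catalan n : ℝ) * x ^ n) := catalan_summable' habs
  have hxp : ∀ k : ℕ, x ^ k = 3 ^ k * z ^ k := fun k => mul_pow 3 z k
  -- summability of the rewritten series
  have hsum' : Summable (fun n : ℕ => 2 * 3 ^ n * (catalan n : ℝ) / (n + 2) * z ^ n) := by
    apply Summable.of_norm_bounded (g := fun n => 2 * (12 * z) ^ n)
    · exact (summable_geometric_of_lt_one (by positivity) (by linarith)).mul_left 2
    · intro n
      have hc4 : (catalan n : ℝ) ≤ 4 ^ n := by exact_mod_cast catalan_le_four_pow' n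
      have hn0 : (0:ℝ) ≤ (n : ℝ) := Nat.cast_nonneg n
      have hn2 : (1:ℝ) ≤ (n : ℝ) + 2 := by linarith
      have hnn : (0:ℝ) ≤ 2 * 3 ^ n * (catalan n : ℝ) / (n + 2) * z ^ n := by positivity
      rw [Real.norm_eq_abs, abs_of_nonneg hnn]
      calc 2 * 3 ^ n * (catalan n : ℝ) / (n + 2) * z ^ n
          ≤ 2 * 3 ^ n * (catalan n : ℝ) / 1 * z ^ n := by
            gcongr
          _ = 2 * (3 ^ n * (catalan n : ℝ)) * z ^ n := by ring
          _ ≤ 2 * (3 ^ n * 4 ^ n) * z ^ n := by gcongr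
          _ = 2 * (12 * z) ^ n := by
            rw [show (12:ℝ) = 3 * 4 by norm_num, mul_pow, mul_pow]; ring
  have hsum : Summable (fun n : ℕ => (2 * (2 * n)! * 3 ^ n / ((n + 2)! * n !) : ℝ) * z ^ n) :=
    hsum'.congr fun n => by rw [tutte_m_eq n]
  refine ⟨hsum, ?_⟩
  have htsum_eq : (∑' n : ℕ, (2 * (2 * n)! * 3 ^ n / ((n + 2)! * n !) : ℝ) * z ^ n)
      = ∑' n : ℕ, 2 * 3 ^ n * (catalan n : ℝ) / (n + 2) * z ^ n :=
    tsum_congr fun n => by rw [tutte_m_eq n]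
  rw [htsum_eq]
  set g : ℝ := ∑' n : ℕ, 2 * 3 ^ n * (catalan n : ℝ) / (n + 2) * z ^ n with hgdef
  set A : ℝ := catGF x with hAdef
  -- the key linear identity
  have h1 : Summable (fun n : ℕ => 12 * z * ((catalan n : ℝ) * x ^ n)) := hA.mul_left _
  have h2 : Summable (fun n : ℕ =>
      9 * z * (2 * 3 ^ n * (catalan n : ℝ) / (n + 2) * z ^ n)) := hsum'.mul_left _
  have term_eq : ∀ n : ℕ, 12 * z * ((catalan n : ℝ) * x ^ n)
      - 9 * z * (2 * 3 ^ n * (catalan n : ℝ) / (n + 2) * z ^ n)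
      = (catalan (n + 1) : ℝ) * x ^ (n + 1) := by
    intro n
    rw [hxp n, hxp (n + 1)]
    linear_combination z ^ (n + 1) * coeff_identity n
  have hshift : (∑' n : ℕ, (catalan (n + 1) : ℝ) * x ^ (n + 1))
      = (∑' n : ℕ, (catalan n : ℝ) * x ^ n) - 1 := by
    rw [Summable.tsum_eq_zero_add hA]
    simp
  have key : 12 * z * A - 9 * z * g = A - 1 := by
    rw [hAdef, catGF, hgdef, ← tsum_mul_left, ← tsum_mul_left, ← Summable.tsum_sub h1 h2,
      tsum_congr term_eq, hshift]
  -- closed form of the rpow term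
  have hpos : (0:ℝ) < 1 - 12 * z := by linarith
  have hrpow : (1 - 12 * z) ^ ((3 : ℝ) / 2) = (1 - 12 * z) * (1 - 2 * x * A) := by
    rw [show (3:ℝ)/2 = 1 + 1/2 by norm_num, Real.rpow_add hpos, Real.rpow_one,
      ← Real.sqrt_eq_rpow]
    have h12 : 1 - 4 * x = 1 - 12 * z := by rw [hxdef]; ring
    rw [show Real.sqrt (1 - 12 * z) = Real.sqrt (1 - 4 * x) by rw [h12],
      catGF_sqrt hx0.le hx4, hAdef]
  rw [hrpow, eq_div_iff (by positivity : (54 * z ^ 2 : ℝ) ≠ 0)]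
  have hx3z : x = 3 * z := hxdef
  rw [hx3z]
  linear_combination (-6 * z) * key
end

section
/- For real u with 0 < u < 6/5 and u ≠ 1, define a₀(u) := (−3u² + 36u − 36 + √(3(u+2)(6−5u)³)) / (6u²(u−1)). Then a₀(u) = 1 + (u²/12)·a₀(u)² + u·(4/3 − u·a₀(u)) / (12(1−u)) for all such u, and lim_{u→1} a₀(u) = 4/3. -/
open Real Filter

/-- The coefficient `a₀(u)` of `Z⁰` in the singular expansion of `M(z,u)` at `z = 1/12`. -/
noncomputable def a₀ (u : ℝ) : ℝ :=
  (-3 * u ^ 2 + 36 * u - 36 + Real.sqrt (3 * (u + 2) * (6 - 5 * u) ^ 3))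
    / (6 * u ^ 2 * (u - 1))

/-- `a₀(u)` satisfies the coefficient equation of `Z⁰` of the catalytic functional
equation of rooted planar maps, and tends to `4/3` as `u → 1`. -/
theorem a0_equation_and_limit :
    (∀ u : ℝ, 0 < u → u < 6 / 5 → u ≠ 1 →
      a₀ u = 1 + u ^ 2 / 12 * (a₀ u) ^ 2 + u * (4 / 3 - u * a₀ u) / (12 * (1 - u))) ∧
    Filter.Tendsto a₀ (nhdsWithin 1 {(1 : ℝ)}ᶜ) (nhds (4 / 3)) := by
  constructor
  · intro u hu0 hu hne
    have h2 : (0:ℝ) < u + 2 := by linarith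
    have h6 : (0:ℝ) < 6 - 5*u := by linarith
    have hs2 : Real.sqrt (3 * (u + 2) * (6 - 5 * u) ^ 3) ^ 2 = 3 * (u + 2) * (6 - 5 * u) ^ 3 :=
      Real.sq_sqrt (by positivity)
    set s := Real.sqrt (3 * (u + 2) * (6 - 5 * u) ^ 3) with hsdef
    have hu1 : u - 1 ≠ 0 := sub_ne_zero.mpr hne
    have h1u : 1 - u ≠ 0 := sub_ne_zero.mpr (Ne.symm hne)
    have hu' : u ≠ 0 := ne_of_gt hu0
    unfold a₀
    rw [← hsdef]
    field_simp
    linear_combination (3*u - 3) * hs2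
  · set f : ℝ → ℝ := fun u =>
      (72 - 64 * u) / (Real.sqrt (3 * (u + 2) * (6 - 5 * u) ^ 3) - (-3 * u ^ 2 + 36 * u - 36))
      with hf
    have h9 : Real.sqrt (3 * ((1:ℝ) + 2) * (6 - 5 * 1) ^ 3) = 3 := by
      rw [show 3 * ((1:ℝ) + 2) * (6 - 5 * 1) ^ 3 = 3 ^ 2 by norm_num]
      exact Real.sqrt_sq (by norm_num)
    have hfc : ContinuousAt f 1 := by
      apply ContinuousAt.div
      · fun_prop
      · exact ((Real.continuous_sqrt.comp (by continuity)).sub (by continuity)).continuousAt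
      · rw [h9]; norm_num
    have hf1 : f 1 = 4 / 3 := by rw [hf]; simp only; rw [h9]; norm_num
    have htend : Tendsto f (nhdsWithin 1 {(1 : ℝ)}ᶜ) (nhds (4 / 3)) := by
      rw [← hf1]
      exact hfc.continuousWithinAt.tendsto
    refine Tendsto.congr' ?_ htend
    filter_upwards [self_mem_nhdsWithin,
      nhdsWithin_le_nhds (Ioo_mem_nhds (by norm_num : (1:ℝ)/2 < 1) (by norm_num : (1:ℝ) < 9/8))]
      with u hne hu
    have hne1 : u ≠ 1 := hne
    obtain ⟨hl, hr⟩ := hu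
    have hu0 : (0:ℝ) < u := by linarith
    have h2 : (0:ℝ) < u + 2 := by linarith
    have h6 : (0:ℝ) < 6 - 5*u := by linarith
    have hs2 : Real.sqrt (3 * (u + 2) * (6 - 5 * u) ^ 3) ^ 2 = 3 * (u + 2) * (6 - 5 * u) ^ 3 :=
      Real.sq_sqrt (by positivity)
    set s := Real.sqrt (3 * (u + 2) * (6 - 5 * u) ^ 3) with hsdef
    have hu1 : u - 1 ≠ 0 := sub_ne_zero.mpr hne1
    have hu' : u ≠ 0 := ne_of_gt hu0
    have h89 : 8*u - 9 ≠ 0 := by intro h; nlinarith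
    have hsP : s - (-3 * u ^ 2 + 36 * u - 36) ≠ 0 := by
      intro h
      have hs : s = -3 * u ^ 2 + 36 * u - 36 := by linarith [h]
      have hz : 48 * u^2 * (u - 1) * (8*u - 9) = 0 := by
        linear_combination hs2 - (s + (-3 * u ^ 2 + 36 * u - 36)) * hs
      have : (48:ℝ) * u^2 * (u-1) * (8*u-9) ≠ 0 := by positivity
      exact this hz
    show f u = a₀ u
    rw [hf]; simp only
    rw [← hsdef]
    unfold a₀
    rw [← hsdef]
    rw [div_eq_div_iff hsP (by positivity)]
    linear_combination -hs2
end

section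
/- Let m : ℕ × ℕ → ℕ be defined by the recurrence m(0,k) = 1 if k = 0 and m(0,k) = 0 otherwise, and for all n ≥ 0 and k ≥ 0: m(n+1,k) = Σ_{n₁+n₂=n} Σ_{k₁+k₂=k−2, k₁,k₂≥0} m(n₁,k₁)·m(n₂,k₂) + Σ_{j=k−1}^{2n} m(n,j), where the first (double) sum is empty when k < 2 and the second sum is empty when k = 0; set mₙ := Σ_{k=0}^{2n} m(n,k). Then for all integers n ≥ k ≥ 1, m(n,k) ≥ m_{n−k}. -/
open Finset Nat

/-- For Tutte's numbers `m n k` of rooted planar maps with `n` edges and root face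
valency `k` (defined through the root-edge deletion recurrence), gluing a `k`-cycle
into the root face of an arbitrary map with `n − k` edges gives `m n k ≥ m_{n−k}`. -/
theorem maps_pure_gon_lower_bound
    (m : ℕ → ℕ → ℕ)
    (h0 : ∀ k, m 0 k = if k = 0 then 1 else 0)
    (hrec : ∀ n k, m (n + 1) k =
      (if 2 ≤ k then
        ∑ p ∈ Finset.HasAntidiagonal.antidiagonal n, ∑ q ∈ Finset.HasAntidiagonal.antidiagonal (k - 2),
          m p.1 q.1 * m p.2 q.2
       else 0)
      + (if k = 0 then 0 else ∑ j ∈ Finset.Icc (k - 1) (2 * n), m n j)) :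
    ∀ n k : ℕ, 1 ≤ k → k ≤ n →
      (∑ j ∈ Finset.range (2 * (n - k) + 1), m (n - k) j) ≤ m n k := by
  intro n k hk hkn
  induction k generalizing n with
  | zero => omega
  | succ k ih =>
    obtain ⟨n', rfl⟩ : ∃ n', n = n' + 1 := ⟨n - 1, by omega⟩
    cases k with
    | zero =>
      have h := hrec n' 1
      simp only [show ¬ (2 ≤ 1) from by omega, if_false, if_neg one_ne_zero,
        zero_add] at h
      rw [h]
      simp only [Nat.add_sub_cancel]
      rw [show Finset.range (2 * n' + 1) = Finset.Icc (1 - 1) (2 * n') by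
        rw [Nat.sub_self, ← Finset.Ico_add_one_right_eq_Icc, Finset.range_eq_Ico]]
    | succ k =>
      have hk' : 1 ≤ k + 1 := by omega
      have hkn' : k + 1 ≤ n' := by omega
      have h := hrec n' (k + 2)
      have h1 : m n' (k + 1) ≤ ∑ j ∈ Finset.Icc (k + 2 - 1) (2 * n'), m n' j := by
        apply Finset.single_le_sum (f := fun j => m n' j) (fun _ _ => Nat.zero_le _)
        simp only [Finset.mem_Icc]
        omega
      calc (∑ j ∈ Finset.range (2 * (n' + 1 - (k + 1 + 1)) + 1), m (n' + 1 - (k + 1 + 1)) j)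
          = ∑ j ∈ Finset.range (2 * (n' - (k + 1)) + 1), m (n' - (k + 1)) j := by
            rw [show n' + 1 - (k + 1 + 1) = n' - (k + 1) from by omega]
        _ ≤ m n' (k + 1) := ih n' hk' hkn'
        _ ≤ ∑ j ∈ Finset.Icc (k + 2 - 1) (2 * n'), m n' j := h1
        _ ≤ m (n' + 1) (k + 2) := by
            rw [h, if_pos (by omega), if_neg (by omega)]
            exact Nat.le_add_left _ _
end
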